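/- arXiv:1108.5357 — 2 statements merged into one kernel-verified Lean document; each statement's English description precedes it below -/
import Mathlib

section
/- Let I be the identity channel on n qubits composed with an encoding CPTP map Λ_enc : states on (C²)^{⊗nR} → states on (C²)^{⊗n} and decoding CPTP map Λ_dec : states on (C²)^{⊗n} → states on (C²)^{⊗nR}, with R > 1. Then the channel fidelity satisfies F_c(Λ_dec ∘ Λ_enc) ≤ 2^{−n(R−1)}, where F_c(E) = ⟨φ|(E ⊗ I)(|φ⟩⟨φ|)|φ⟩ with φ the maximally entangled state on (C²)^{⊗nR} ⊗ (C²)^{⊗nR}. Equivalently, F_c(Λ_dec ∘ Λ_enc) = Σ_{j,k} |tr[D_k E_j (1/2^{nR})]|² ≤ 2^{−n(R−1)} for any Kraus decompositions {E_j} of Λ_enc and {D_k} of Λ_dec. -/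
open Matrix Kronecker BigOperators
open scoped ComplexOrder

noncomputable section
attribute [local instance] Classical.propDecidable

/-- Square root of a positive semidefinite matrix (junk value `0` otherwise). -/
def msqrt {n : Type*} [Fintype n] [DecidableEq n] (ρ : Matrix n n ℂ) : Matrix n n ℂ :=
  if h : ρ.PosSemidef then
    (h.1.eigenvectorUnitary : Matrix n n ℂ) *
      Matrix.diagonal ((↑) ∘ Real.sqrt ∘ h.1.eigenvalues) *
      star (h.1.eigenvectorUnitary : Matrix n n ℂ)
  else 0

/-- The trace norm `‖M‖₁ = tr √(Mᴴ M)` of a (possibly rectangular) complex matrix. -/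
def traceNorm {n m : Type*} [Fintype n] [Fintype m] [DecidableEq m] (M : Matrix n m ℂ) : ℝ :=
  (msqrt (Mᴴ * M)).trace.re

/-- The Hilbert-Schmidt (Frobenius) norm of a complex matrix. -/
def frobNorm {n m : Type*} [Fintype n] [Fintype m] (M : Matrix n m ℂ) : ℝ :=
  Real.sqrt (∑ i, ∑ j, ‖M i j‖ ^ 2)

/-- A density operator: positive semidefinite with unit trace. -/
def IsDensity {n : Type*} [Fintype n] (ρ : Matrix n n ℂ) : Prop :=
  ρ.PosSemidef ∧ ρ.trace = 1

/-- The projector onto the support of a Hermitian matrix (junk value `0` otherwise). -/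
def suppProj {n : Type*} [Fintype n] [DecidableEq n] (ρ : Matrix n n ℂ) : Matrix n n ℂ :=
  if h : ρ.IsHermitian then
    (h.eigenvectorUnitary : Matrix n n ℂ) *
      Matrix.diagonal (fun i => if h.eigenvalues i = 0 then (0 : ℂ) else 1) *
      star (h.eigenvectorUnitary : Matrix n n ℂ)
  else 0

/-- The von Neumann entropy (base 2) of a Hermitian matrix (junk value `0` otherwise). -/
def vnEntropy {n : Type*} [Fintype n] [DecidableEq n] (ρ : Matrix n n ℂ) : ℝ :=
  if h : ρ.IsHermitian then -∑ i, h.eigenvalues i * Real.logb 2 (h.eigenvalues i) else 0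

/-- Partial trace over the second tensor factor. -/
def ptr2 {X Y : Type*} [Fintype X] [Fintype Y] (ρ : Matrix (X × Y) (X × Y) ℂ) :
    Matrix X X ℂ :=
  Matrix.of fun x x' => ∑ y, ρ (x, y) (x', y)

/-- Partial trace over the first tensor factor. -/
def ptr1 {X Y : Type*} [Fintype X] [Fintype Y] (ρ : Matrix (X × Y) (X × Y) ℂ) :
    Matrix Y Y ℂ :=
  Matrix.of fun y y' => ∑ x, ρ (x, y) (x, y')

/-- The rank-one projector `|ψ⟩⟨ψ|` associated to a vector `ψ`. -/
def pureMat {n : Type*} (ψ : n → ℂ) : Matrix n n ℂ :=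
  Matrix.vecMulVec ψ (star ψ)

/-- `ψ` is a unit vector. -/
def IsUnit' {n : Type*} [Fintype n] (ψ : n → ℂ) : Prop := ∑ z, ‖ψ z‖ ^ 2 = 1

/-- The binary entropy function with logarithms in base 2. -/
def binEnt (x : ℝ) : ℝ := -(x * Real.logb 2 x) - (1 - x) * Real.logb 2 (1 - x)

/-- The entanglement of formation of a bipartite state, as the infimum over pure-state
decompositions of the average entropy of entanglement. -/
def EoF {A B : Type*} [Fintype A] [Fintype B] [DecidableEq A]
    (ρ : Matrix (A × B) (A × B) ℂ) : ℝ :=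
  sInf { x | ∃ (m : ℕ) (p : Fin m → ℝ) (ψ : Fin m → (A × B) → ℂ),
    (∀ i, 0 < p i) ∧ (∀ i, IsUnit' (ψ i)) ∧
    ρ = ∑ i, (p i : ℂ) • pureMat (ψ i) ∧
    x = ∑ i, p i * vnEntropy (ptr2 (pureMat (ψ i))) }

/-- The alternative conditional max-entropy
`H₀(A|B)_ρ = sup_σ log tr[ρ⁰ (1 ⊗ σ)]`, supremum over density operators `σ` on `B`. -/
def H0cond {A B : Type*} [Fintype A] [Fintype B] [DecidableEq A] [DecidableEq B]
    (ρ : Matrix (A × B) (A × B) ℂ) : ℝ :=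
  sSup { x | ∃ σ : Matrix B B ℂ, IsDensity σ ∧
    x = Real.logb 2 ((suppProj ρ * ((1 : Matrix A A ℂ) ⊗ₖ σ)).trace.re) }

/-- Separability of a bipartite state. -/
def IsSep {A B : Type*} [Fintype A] [Fintype B] (ρ : Matrix (A × B) (A × B) ℂ) : Prop :=
  ∃ (N : ℕ) (q : Fin N → ℝ) (α : Fin N → Matrix A A ℂ) (β : Fin N → Matrix B B ℂ),
    (∀ i, 0 ≤ q i) ∧ (∀ i, IsDensity (α i)) ∧ (∀ i, IsDensity (β i)) ∧
    ρ = ∑ i, (q i : ℂ) • (α i ⊗ₖ β i)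

/-- `n`-fold tensor power of a matrix. -/
def tensorPow {X : Type*} (ρ : Matrix X X ℂ) (n : ℕ) :
    Matrix (Fin n → X) (Fin n → X) ℂ :=
  Matrix.of fun f g => ∏ i, ρ (f i) (g i)


private lemma trace_hermitize_re {p q : Type*} [Fintype p] [Fintype q]
    (M : Matrix p q ℂ) :
    ((Mᴴ * M).trace) = ((∑ i, ∑ j, ‖M i j‖ ^ 2 : ℝ) : ℂ) := by
  simp only [Matrix.trace, Matrix.diag, Matrix.mul_apply, Matrix.conjTranspose_apply]
  rw [Finset.sum_comm]
  push_cast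
  refine Finset.sum_congr rfl fun i _ => Finset.sum_congr rfl fun j _ => ?_
  exact RCLike.conj_mul (M i j)

private lemma trace_sq_le {p q : Type*} [Fintype p] [Fintype q]
    (A : Matrix p q ℂ) (B : Matrix q p ℂ) :
    ‖(A * B).trace‖ ^ 2 ≤
      (∑ x : p × q, ‖A x.1 x.2‖ ^ 2) * (∑ x : p × q, ‖B x.2 x.1‖ ^ 2) := by
  have h1 : (A * B).trace = ∑ x : p × q, A x.1 x.2 * B x.2 x.1 := by
    rw [Fintype.sum_prod_type]
    simp [Matrix.trace, Matrix.diag, Matrix.mul_apply]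
  calc ‖(A * B).trace‖ ^ 2
      ≤ (∑ x : p × q, ‖A x.1 x.2‖ * ‖B x.2 x.1‖) ^ 2 := by
        apply pow_le_pow_left₀ (norm_nonneg _)
        rw [h1]
        refine (norm_sum_le _ _).trans ?_
        refine Finset.sum_le_sum fun x _ => ?_
        rw [norm_mul]
    _ ≤ (∑ x : p × q, ‖A x.1 x.2‖ ^ 2) * (∑ x : p × q, ‖B x.2 x.1‖ ^ 2) :=
        Finset.sum_mul_sq_le_sq_mul_sq _ _ _

/-- For any Kraus decompositions `{E_j}` of an encoder from `m` qubits to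
`n` qubits and `{D_k}` of a decoder back to `m` qubits (with `m = nR > n`, i.e. rate `R > 1`),
the channel fidelity `Σ_{j,k} |tr[D_k E_j (1/2^m)]|²` is at most `2^{−n(R−1)} = 2^n / 2^m`. -/
theorem channel_fidelity_identity_bound {n m : ℕ} (hn : 0 < n) (hnm : n < m)
    {J K : Type*} [Fintype J] [Fintype K]
    (E : J → Matrix (Fin (2 ^ n)) (Fin (2 ^ m)) ℂ)
    (D : K → Matrix (Fin (2 ^ m)) (Fin (2 ^ n)) ℂ)
    (hE : ∑ j, (E j)ᴴ * E j = 1) (hD : ∑ k, (D k)ᴴ * D k = 1) :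
    ∑ j, ∑ k, ‖(D k * E j).trace / ((2 : ℂ) ^ m)‖ ^ 2 ≤ (2 : ℝ) ^ n / (2 : ℝ) ^ m := by

  -- Abbreviations for squared Frobenius norms
  set a : J → ℝ := fun j => ∑ x : Fin (2 ^ m) × Fin (2 ^ n), ‖E j x.2 x.1‖ ^ 2 with ha
  set b : K → ℝ := fun k => ∑ x : Fin (2 ^ m) × Fin (2 ^ n), ‖D k x.1 x.2‖ ^ 2 with hb
  have hbsum : ∑ k, b k = (2 : ℝ) ^ n := by
    have h := congrArg Matrix.trace hD
    rw [Matrix.trace_sum] at h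
    have h' := congrArg Complex.re h
    rw [Complex.re_sum] at h'
    have : ∀ k, ((D k)ᴴ * D k).trace.re = b k := by
      intro k
      simp only [trace_hermitize_re, Complex.ofReal_re, hb, Fintype.sum_prod_type]
    rw [Finset.sum_congr rfl (fun k _ => this k)] at h'
    rw [h', Matrix.trace_one, Fintype.card_fin, Complex.natCast_re]
    push_cast
    ring
  have hasum : ∑ j, a j = (2 : ℝ) ^ m := by
    have h := congrArg Matrix.trace hE
    rw [Matrix.trace_sum] at h
    have h' := congrArg Complex.re h
    rw [Complex.re_sum] at h'
    have : ∀ j, ((E j)ᴴ * E j).trace.re = a j := by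
      intro j
      simp only [trace_hermitize_re, Complex.ofReal_re, ha, Fintype.sum_prod_type]
      exact Finset.sum_comm
    rw [Finset.sum_congr rfl (fun j _ => this j)] at h'
    rw [h', Matrix.trace_one, Fintype.card_fin, Complex.natCast_re]
    push_cast
    ring
  have key : ∀ j k, ‖(D k * E j).trace / ((2 : ℂ) ^ m)‖ ^ 2 ≤
      b k * a j / ((2 : ℝ) ^ m) ^ 2 := by
    intro j k
    rw [norm_div, div_pow]
    have h2 : ‖(2 : ℂ) ^ m‖ ^ 2 = ((2 : ℝ) ^ m) ^ 2 := by
      rw [norm_pow]; norm_num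
    rw [h2]
    apply div_le_div_of_nonneg_right ?_ (by positivity)
    exact trace_sq_le (D k) (E j)
  calc ∑ j, ∑ k, ‖(D k * E j).trace / ((2 : ℂ) ^ m)‖ ^ 2
      ≤ ∑ j, ∑ k, b k * a j / ((2 : ℝ) ^ m) ^ 2 :=
        Finset.sum_le_sum fun j _ => Finset.sum_le_sum fun k _ => key j k
    _ = (∑ k, b k) * (∑ j, a j) / ((2 : ℝ) ^ m) ^ 2 := by
        rw [Finset.sum_comm]
        simp_rw [← Finset.sum_div, ← Finset.mul_sum, ← Finset.sum_mul]
    _ = (2 : ℝ) ^ n / (2 : ℝ) ^ m := by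
        rw [hbsum, hasum]; field_simp


end
end

section
/- Let ρ_AB be a positive semi-definite operator on a finite-dimensional H_A ⊗ H_B. Then the alternative conditional max-entropy is lower bounded by the conditional von Neumann entropy: H_0(A|B)_ρ ≥ H(A|B)_ρ, where H_0(A|B)_ρ = sup over density operators σ_B of log tr[ρ_AB^0(1_A ⊗ σ_B)] and H(A|B)_ρ = H(AB)_ρ − H(B)_ρ with H the von Neumann entropy. -/
open Matrix Kronecker BigOperators
open scoped ComplexOrder

noncomputable section
attribute [local instance] Classical.propDecidable

/-! ### Auxiliary lemmas -/

lemma gibbs_aux {ι : Type*} [Fintype ι] (p r : ι → ℝ) (S : ℝ)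
    (hp : ∀ i, 0 ≤ p i) (hr : ∀ i, 0 ≤ r i) (hsum : ∑ i, p i = 1)
    (hsupp : ∀ i, 0 < p i → 0 < r i)
    (hS : ∑ i ∈ Finset.univ.filter (fun i => 0 < p i), r i ≤ S) :
    - Real.log S ≤ ∑ i, p i * (Real.log (p i) - Real.log (r i)) := by
  classical
  set F := Finset.univ.filter (fun i => 0 < p i) with hF
  have hpF' : ∑ i ∈ F, p i = ∑ i, p i := by
    refine Finset.sum_subset (Finset.subset_univ F) fun i _ hi => ?_
    have h' : ¬ 0 < p i := by simpa [hF] using hi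
    linarith [hp i]
  have hpF : ∑ i ∈ F, p i = 1 := hpF'.trans hsum
  set T := ∑ i ∈ F, r i with hT
  have hT0 : 0 < T := by
    obtain ⟨i, hi⟩ : ∃ i, 0 < p i := by
      by_contra h
      push_neg at h
      have : ∑ i, p i ≤ 0 := Finset.sum_nonpos fun i _ => h i
      linarith
    refine Finset.sum_pos' (fun i _ => hr i) ⟨i, ?_, hsupp i hi⟩
    simp [hF, hi]
  have key : ∀ i ∈ F, p i * (Real.log (r i) - Real.log (p i) - Real.log T) ≤ r i / T - p i := by
    intro i hi
    have hpi : 0 < p i := by simpa [hF] using hi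
    have hri : 0 < r i := hsupp i hpi
    have hx : 0 < r i / (T * p i) := by positivity
    have h1 : Real.log (r i / (T * p i)) ≤ r i / (T * p i) - 1 :=
      Real.log_le_sub_one_of_pos hx
    have h2 : Real.log (r i / (T * p i)) = Real.log (r i) - Real.log T - Real.log (p i) := by
      rw [Real.log_div (ne_of_gt hri) (by positivity), Real.log_mul (ne_of_gt hT0) (ne_of_gt hpi)]
      ring
    have h3 := mul_le_mul_of_nonneg_left h1 (le_of_lt hpi)
    rw [h2] at h3
    calc p i * (Real.log (r i) - Real.log (p i) - Real.log T)
        = p i * (Real.log (r i) - Real.log T - Real.log (p i)) := by ring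
      _ ≤ p i * (r i / (T * p i) - 1) := h3
      _ = r i / T - p i := by field_simp
  have hsumF : ∑ i ∈ F, p i * (Real.log (r i) - Real.log (p i) - Real.log T) ≤ 0 := by
    calc ∑ i ∈ F, p i * (Real.log (r i) - Real.log (p i) - Real.log T)
        ≤ ∑ i ∈ F, (r i / T - p i) := Finset.sum_le_sum key
      _ = T / T - 1 := by rw [Finset.sum_sub_distrib, ← Finset.sum_div, hpF]
      _ = 0 := by rw [div_self (ne_of_gt hT0)]; ring
  have hmain : - Real.log T ≤ ∑ i ∈ F, p i * (Real.log (p i) - Real.log (r i)) := by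
    have expand : ∑ i ∈ F, p i * (Real.log (r i) - Real.log (p i) - Real.log T)
        = - (∑ i ∈ F, p i * (Real.log (p i) - Real.log (r i))) - Real.log T := by
      calc ∑ i ∈ F, p i * (Real.log (r i) - Real.log (p i) - Real.log T)
          = ∑ i ∈ F, (-(p i * (Real.log (p i) - Real.log (r i))) - Real.log T * p i) :=
            Finset.sum_congr rfl fun i _ => by ring
        _ = -(∑ i ∈ F, p i * (Real.log (p i) - Real.log (r i))) - Real.log T * ∑ i ∈ F, p i := by
            rw [Finset.sum_sub_distrib, Finset.sum_neg_distrib, Finset.mul_sum]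
        _ = _ := by rw [hpF]; ring
    rw [expand] at hsumF
    linarith
  have hfull : ∑ i ∈ F, p i * (Real.log (p i) - Real.log (r i))
      = ∑ i, p i * (Real.log (p i) - Real.log (r i)) := by
    refine Finset.sum_subset (Finset.subset_univ F) fun i _ hi => ?_
    have h' : ¬ 0 < p i := by simpa [hF] using hi
    have : p i = 0 := le_antisymm (not_lt.mp h') (hp i)
    simp [this]
  have hTS : Real.log T ≤ Real.log S := Real.log_le_log hT0 hS
  calc - Real.log S ≤ - Real.log T := by linarith
    _ ≤ ∑ i ∈ F, p i * (Real.log (p i) - Real.log (r i)) := hmain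
    _ = _ := hfull

def qF {n : Type*} [Fintype n] (N : Matrix n n ℂ) (u : n → ℂ) : ℂ :=
  ∑ y, ∑ x, (starRingEnd ℂ) (u y) * N y x * u x

lemma trace_conj_diag_mul {n : Type*} [Fintype n] [DecidableEq n]
    (U : Matrix n n ℂ) (d : n → ℂ) (N : Matrix n n ℂ) :
    (U * Matrix.diagonal d * star U * N).trace = ∑ k, d k * qF N (fun x => U x k) := by
  have h1 : ∀ x y, (U * Matrix.diagonal d * star U) x y
      = ∑ k, U x k * d k * (starRingEnd ℂ) (U y k) := by
    intro x y
    simp [Matrix.mul_apply, Matrix.diagonal_apply, Matrix.star_apply, RCLike.star_def,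
      mul_ite, ite_mul, zero_mul, mul_zero]
  calc (U * Matrix.diagonal d * star U * N).trace
      = ∑ x, ∑ y, ∑ k, U x k * d k * (starRingEnd ℂ) (U y k) * N y x := by
        simp [Matrix.trace, Matrix.mul_apply, h1, Finset.sum_mul]
    _ = ∑ x, ∑ k, ∑ y, U x k * d k * (starRingEnd ℂ) (U y k) * N y x :=
        Finset.sum_congr rfl fun x _ => by rw [Finset.sum_comm]
    _ = ∑ k, ∑ x, ∑ y, U x k * d k * (starRingEnd ℂ) (U y k) * N y x := by
        rw [Finset.sum_comm]
    _ = ∑ k, d k * qF N (fun x => U x k) := by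
        refine Finset.sum_congr rfl fun k _ => ?_
        rw [qF, Finset.mul_sum, Finset.sum_comm]
        refine Finset.sum_congr rfl fun x _ => ?_
        rw [Finset.mul_sum]
        exact Finset.sum_congr rfl fun y _ => by ring

lemma qF_kron {A B : Type*} [Fintype A] [Fintype B] [DecidableEq A] [DecidableEq B]
    (M : Matrix B B ℂ) (u : A × B → ℂ) :
    qF ((1 : Matrix A A ℂ) ⊗ₖ M) u
      = ∑ a, ∑ b, ∑ b', (starRingEnd ℂ) (u (a, b)) * M b b' * u (a, b') := by
  rw [qF]
  rw [Fintype.sum_prod_type]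
  refine Finset.sum_congr rfl fun a _ => Finset.sum_congr rfl fun b _ => ?_
  rw [Fintype.sum_prod_type]
  simp [Matrix.kroneckerMap_apply, Matrix.one_apply, ite_mul, mul_ite, zero_mul, mul_zero]

lemma conj_diag_entry {n : Type*} [Fintype n] [DecidableEq n]
    (V : Matrix n n ℂ) (e : n → ℂ) (b b' : n) :
    (V * Matrix.diagonal e * star V) b b' = ∑ j, V b j * e j * (starRingEnd ℂ) (V b' j) := by
  simp [Matrix.mul_apply, Matrix.diagonal_apply, Matrix.star_apply, RCLike.star_def,
    mul_ite, ite_mul, zero_mul, mul_zero]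

lemma sum_conj_diag_form {A B : Type*} [Fintype A] [Fintype B] [DecidableEq B]
    (V : Matrix B B ℂ) (e : B → ℂ) (u : A × B → ℂ) :
    (∑ a, ∑ b, ∑ b', (starRingEnd ℂ) (u (a, b)) * (V * Matrix.diagonal e * star V) b b' * u (a, b'))
      = ∑ j, e j * ∑ a : A, (starRingEnd ℂ) (∑ b, (starRingEnd ℂ) (V b j) * u (a, b))
          * (∑ b, (starRingEnd ℂ) (V b j) * u (a, b)) := by
  calc (∑ a, ∑ b, ∑ b', (starRingEnd ℂ) (u (a, b)) * (V * Matrix.diagonal e * star V) b b' * u (a, b'))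
      = ∑ a, ∑ b, ∑ b', ∑ j, e j * (V b j * (starRingEnd ℂ) (u (a, b))
          * ((starRingEnd ℂ) (V b' j) * u (a, b'))) := by
        refine Finset.sum_congr rfl fun a _ => Finset.sum_congr rfl fun b _ =>
          Finset.sum_congr rfl fun b' _ => ?_
        rw [conj_diag_entry, Finset.mul_sum, Finset.sum_mul]
        exact Finset.sum_congr rfl fun j _ => by ring
    _ = ∑ a, ∑ b, ∑ j, ∑ b', e j * (V b j * (starRingEnd ℂ) (u (a, b))
          * ((starRingEnd ℂ) (V b' j) * u (a, b'))) := by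
        refine Finset.sum_congr rfl fun a _ => Finset.sum_congr rfl fun b _ => ?_
        rw [Finset.sum_comm]
    _ = ∑ a, ∑ j, ∑ b, ∑ b', e j * (V b j * (starRingEnd ℂ) (u (a, b))
          * ((starRingEnd ℂ) (V b' j) * u (a, b'))) := by
        refine Finset.sum_congr rfl fun a _ => ?_
        rw [Finset.sum_comm]
    _ = ∑ j, ∑ a, ∑ b, ∑ b', e j * (V b j * (starRingEnd ℂ) (u (a, b))
          * ((starRingEnd ℂ) (V b' j) * u (a, b'))) := by
        rw [Finset.sum_comm]
    _ = ∑ j, e j * ∑ a : A, (starRingEnd ℂ) (∑ b, (starRingEnd ℂ) (V b j) * u (a, b))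
          * (∑ b, (starRingEnd ℂ) (V b j) * u (a, b)) := by
        refine Finset.sum_congr rfl fun j _ => ?_
        rw [Finset.mul_sum]
        refine Finset.sum_congr rfl fun a _ => ?_
        rw [map_sum, Finset.sum_mul, Finset.mul_sum]
        refine Finset.sum_congr rfl fun b _ => ?_
        rw [Finset.mul_sum, Finset.mul_sum]
        refine Finset.sum_congr rfl fun b' _ => ?_
        simp only [_root_.map_mul, Complex.conj_conj]

lemma trace_supp_kron {A B : Type*} [Fintype A] [Fintype B] [DecidableEq A] [DecidableEq B]
    (ρ : Matrix (A × B) (A × B) ℂ) (hherm : ρ.IsHermitian) {σ : Matrix B B ℂ}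
    (hσ : σ.IsHermitian) :
    (suppProj ρ * ((1 : Matrix A A ℂ) ⊗ₖ σ)).trace
      = ((∑ k, (if hherm.eigenvalues k = 0 then (0:ℝ) else 1) *
          ∑ j, hσ.eigenvalues j *
            ∑ a, Complex.normSq (∑ b, (starRingEnd ℂ) ((hσ.eigenvectorUnitary : Matrix B B ℂ) b j)
              * (hherm.eigenvectorUnitary : Matrix (A × B) (A × B) ℂ) (a, b) k) : ℝ) : ℂ) := by
  rw [suppProj, dif_pos hherm, trace_conj_diag_mul]
  push_cast
  refine Finset.sum_congr rfl fun k _ => ?_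
  have hq : qF ((1 : Matrix A A ℂ) ⊗ₖ σ) (fun x => (hherm.eigenvectorUnitary : Matrix (A × B) (A × B) ℂ) x k)
      = ∑ j, (hσ.eigenvalues j : ℂ) *
          ∑ a, (Complex.normSq (∑ b, (starRingEnd ℂ) ((hσ.eigenvectorUnitary : Matrix B B ℂ) b j)
              * (hherm.eigenvectorUnitary : Matrix (A × B) (A × B) ℂ) (a, b) k) : ℂ) := by
    conv_lhs => rw [hσ.spectral_theorem, Unitary.conjStarAlgAut_apply]
    rw [qF_kron, sum_conj_diag_form (hσ.eigenvectorUnitary : Matrix B B ℂ)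
      (RCLike.ofReal ∘ hσ.eigenvalues)
      (fun x => (hherm.eigenvectorUnitary : Matrix (A × B) (A × B) ℂ) x k)]
    refine Finset.sum_congr rfl fun j _ => ?_
    congr 1
    refine Finset.sum_congr rfl fun a _ => ?_
    rw [← Complex.normSq_eq_conj_mul_self]
  rw [hq]
  congr 1
  split <;> simp

lemma parseval {B : Type*} [Fintype B] [DecidableEq B] (V : Matrix B B ℂ)
    (hV : V * star V = 1) (u : B → ℂ) :
    ∑ j, (starRingEnd ℂ) (∑ b, (starRingEnd ℂ) (V b j) * u b)
        * (∑ b, (starRingEnd ℂ) (V b j) * u b)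
      = ∑ b, (starRingEnd ℂ) (u b) * u b := by
  have hVe : ∀ b b', (∑ j, V b j * (starRingEnd ℂ) (V b' j)) = if b = b' then 1 else 0 := by
    intro b b'
    have := congrFun (congrFun hV b) b'
    simpa [Matrix.mul_apply, Matrix.star_apply, RCLike.star_def, Matrix.one_apply] using this
  calc ∑ j, (starRingEnd ℂ) (∑ b, (starRingEnd ℂ) (V b j) * u b) * (∑ b, (starRingEnd ℂ) (V b j) * u b)
      = ∑ j, ∑ b, ∑ b', V b j * (starRingEnd ℂ) (u b) * ((starRingEnd ℂ) (V b' j) * u b') := by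
        refine Finset.sum_congr rfl fun j _ => ?_
        rw [map_sum, Finset.sum_mul]
        refine Finset.sum_congr rfl fun b _ => ?_
        rw [Finset.mul_sum]
        refine Finset.sum_congr rfl fun b' _ => ?_
        simp [mul_comm, mul_left_comm, mul_assoc]
    _ = ∑ b, ∑ b', (∑ j, V b j * (starRingEnd ℂ) (V b' j)) * ((starRingEnd ℂ) (u b) * u b') := by
        rw [Finset.sum_comm]
        refine Finset.sum_congr rfl fun b _ => ?_
        rw [Finset.sum_comm]
        refine Finset.sum_congr rfl fun b' _ => ?_
        rw [Finset.sum_mul]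
        exact Finset.sum_congr rfl fun j _ => by ring
    _ = ∑ b, (starRingEnd ℂ) (u b) * u b := by
        simp [hVe, ite_mul, zero_mul]

lemma parseval_normSq {B : Type*} [Fintype B] [DecidableEq B] (V : Matrix B B ℂ)
    (hV : V * star V = 1) (u : B → ℂ) :
    ∑ j, Complex.normSq (∑ b, (starRingEnd ℂ) (V b j) * u b) = ∑ b, Complex.normSq (u b) := by
  apply Complex.ofReal_injective
  push_cast [Complex.normSq_eq_conj_mul_self]
  exact parseval V hV u

lemma sum_normSq_one {A B : Type*} [Fintype A] [Fintype B] [DecidableEq A] [DecidableEq B]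
    (U : Matrix (A × B) (A × B) ℂ) (hU : star U * U = 1)
    (V : Matrix B B ℂ) (hV : V * star V = 1) (k : A × B) :
    ∑ j, ∑ a, Complex.normSq (∑ b, (starRingEnd ℂ) (V b j) * U (a, b) k) = 1 := by
  rw [Finset.sum_comm]
  have h1 : ∀ a : A, ∑ j, Complex.normSq (∑ b, (starRingEnd ℂ) (V b j) * U (a, b) k)
      = ∑ b, Complex.normSq (U (a, b) k) := fun a => parseval_normSq V hV _
  simp only [h1]
  have h2 := congrFun (congrFun hU k) k
  simp only [Matrix.mul_apply, Matrix.star_apply, RCLike.star_def, Matrix.one_apply_eq] at h2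
  apply Complex.ofReal_injective
  push_cast [Complex.normSq_eq_conj_mul_self]
  rw [← h2, Fintype.sum_prod_type]

lemma spectral_entry {n : Type*} [Fintype n] [DecidableEq n] (M : Matrix n n ℂ)
    (h : M.IsHermitian) (x y : n) :
    M x y = ∑ k, (h.eigenvectorUnitary : Matrix n n ℂ) x k * (h.eigenvalues k : ℂ)
      * (starRingEnd ℂ) ((h.eigenvectorUnitary : Matrix n n ℂ) y k) := by
  conv_lhs => rw [h.spectral_theorem]
  simp [Matrix.mul_apply, Matrix.diagonal_apply, Finset.sum_mul, Matrix.star_apply,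
    RCLike.star_def]

lemma conj_diag_unitary {n : Type*} [Fintype n] [DecidableEq n] (M : Matrix n n ℂ)
    (h : M.IsHermitian) (j : n) :
    (star (h.eigenvectorUnitary : Matrix n n ℂ) * M * (h.eigenvectorUnitary : Matrix n n ℂ)) j j
      = (h.eigenvalues j : ℂ) := by
  rw [show star (h.eigenvectorUnitary : Matrix n n ℂ) * M * (h.eigenvectorUnitary : Matrix n n ℂ)
      = (Unitary.conjStarAlgAut ℂ (Matrix n n ℂ) (star h.eigenvectorUnitary)) M from by simp,
    h.conjStarAlgAut_star_eigenvectorUnitary, Matrix.diagonal_apply_eq]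
  rfl

lemma ptr1_trace' {X Y : Type*} [Fintype X] [Fintype Y] (ρ : Matrix (X × Y) (X × Y) ℂ) :
    (ptr1 ρ).trace = ρ.trace := by
  rw [Matrix.trace, Matrix.trace, Fintype.sum_prod_type]
  rw [Finset.sum_comm]
  rfl

lemma ptr1_posSemidef {X Y : Type*} [Fintype X] [Fintype Y] [DecidableEq X]
    {ρ : Matrix (X × Y) (X × Y) ℂ} (h : ρ.PosSemidef) : (ptr1 ρ).PosSemidef := by
  classical
  rw [Matrix.posSemidef_iff_dotProduct_mulVec]
  constructor
  · ext y y'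
    have hent : ∀ (a b : X × Y), (starRingEnd ℂ) (ρ b a) = ρ a b := fun a b => by
      have := congrFun (congrFun h.1 a) b
      simpa [Matrix.conjTranspose_apply, RCLike.star_def] using this
    simp only [Matrix.conjTranspose_apply, ptr1, Matrix.of_apply, RCLike.star_def, map_sum]
    exact Finset.sum_congr rfl fun x _ => hent _ _
  · intro v
    have L : star v ⬝ᵥ (ptr1 ρ) *ᵥ v
        = ∑ x : X, ∑ y, ∑ y', (starRingEnd ℂ) (v y) * ρ (x, y) (x, y') * v y' := by
      rw [Finset.sum_comm]
      simp only [dotProduct, Matrix.mulVec, ptr1, Matrix.of_apply, Pi.star_apply,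
        RCLike.star_def, dotProduct]
      refine Finset.sum_congr rfl fun y _ => ?_
      rw [Finset.mul_sum]
      rw [Finset.sum_comm]
      refine Finset.sum_congr rfl fun y' _ => ?_
      rw [Finset.sum_mul, Finset.mul_sum]
      exact Finset.sum_congr rfl fun x _ => by ring
    have R : ∀ x : X, (star (fun q : X × Y => if q.1 = x then v q.2 else 0)) ⬝ᵥ
        ρ *ᵥ (fun q : X × Y => if q.1 = x then v q.2 else 0)
        = ∑ y, ∑ y', (starRingEnd ℂ) (v y) * ρ (x, y) (x, y') * v y' := by
      intro x
      simp only [dotProduct, Matrix.mulVec, Pi.star_apply, RCLike.star_def,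
        Fintype.sum_prod_type, apply_ite (starRingEnd ℂ), map_zero, ite_mul, zero_mul,
        mul_ite, mul_zero, Finset.sum_const_zero, Finset.sum_ite_irrel, Finset.sum_ite_eq,
        Finset.sum_ite_eq', Finset.mem_univ, if_true]
      refine Finset.sum_congr rfl fun y _ => ?_
      rw [Finset.mul_sum]
      exact Finset.sum_congr rfl fun y' _ => by ring
    rw [L]
    refine Finset.sum_nonneg fun x _ => ?_
    rw [← R x]
    exact h.dotProduct_mulVec_nonneg _

lemma sum_eigen_eq_trace {n : Type*} [Fintype n] [DecidableEq n] (M : Matrix n n ℂ)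
    (h : M.IsHermitian) : ((∑ i, h.eigenvalues i : ℝ) : ℂ) = M.trace := by
  conv_rhs => rw [h.spectral_theorem, Unitary.conjStarAlgAut_apply]
  rw [Matrix.trace_mul_cycle, Unitary.coe_star_mul_self, one_mul, Matrix.trace_diagonal]
  push_cast
  rfl

lemma sum_lam_normSq {A B : Type*} [Fintype A] [Fintype B] [DecidableEq A] [DecidableEq B]
    (ρ : Matrix (A × B) (A × B) ℂ) (hherm : ρ.IsHermitian) (hBherm : (ptr1 ρ).IsHermitian) (j : B) :
    ∑ k, hherm.eigenvalues k *
        ∑ a, Complex.normSq (∑ b, (starRingEnd ℂ) ((hBherm.eigenvectorUnitary : Matrix B B ℂ) b j)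
          * (hherm.eigenvectorUnitary : Matrix (A × B) (A × B) ℂ) (a, b) k)
      = hBherm.eigenvalues j := by
  set U : Matrix (A × B) (A × B) ℂ := (hherm.eigenvectorUnitary : Matrix (A × B) (A × B) ℂ) with hUdef
  set V : Matrix B B ℂ := (hBherm.eigenvectorUnitary : Matrix B B ℂ) with hVdef
  apply Complex.ofReal_injective
  push_cast [Complex.normSq_eq_conj_mul_self]
  calc ∑ k, (hherm.eigenvalues k : ℂ) * ∑ a, (starRingEnd ℂ) (∑ b, (starRingEnd ℂ) (V b j) * U (a, b) k)
          * (∑ b, (starRingEnd ℂ) (V b j) * U (a, b) k)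
      = ∑ k, ∑ a, ∑ b', ∑ b, (V b j * (starRingEnd ℂ) (V b' j)) *
          (U (a, b') k * (hherm.eigenvalues k : ℂ) * (starRingEnd ℂ) (U (a, b) k)) := by
        simp only [map_sum, _root_.map_mul, Complex.conj_conj, Finset.mul_sum, Finset.sum_mul]
        refine Finset.sum_congr rfl fun k _ => Finset.sum_congr rfl fun a _ =>
          Finset.sum_congr rfl fun b' _ => Finset.sum_congr rfl fun b _ => by ring
    _ = ∑ a, ∑ b', ∑ b, (V b j * (starRingEnd ℂ) (V b' j)) *
          (∑ k, U (a, b') k * (hherm.eigenvalues k : ℂ) * (starRingEnd ℂ) (U (a, b) k)) := by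
        rw [Finset.sum_comm]
        refine Finset.sum_congr rfl fun a _ => ?_
        rw [Finset.sum_comm]
        refine Finset.sum_congr rfl fun b' _ => ?_
        rw [Finset.sum_comm]
        refine Finset.sum_congr rfl fun b _ => ?_
        rw [Finset.mul_sum]
    _ = ∑ a, ∑ b', ∑ b, (V b j * (starRingEnd ℂ) (V b' j)) * ρ (a, b') (a, b) := by
        refine Finset.sum_congr rfl fun a _ => Finset.sum_congr rfl fun b' _ =>
          Finset.sum_congr rfl fun b _ => ?_
        rw [← spectral_entry ρ hherm]
    _ = ∑ b', ∑ b, (V b j * (starRingEnd ℂ) (V b' j)) * (ptr1 ρ) b' b := by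
        rw [Finset.sum_comm]
        refine Finset.sum_congr rfl fun b' _ => ?_
        rw [Finset.sum_comm]
        refine Finset.sum_congr rfl fun b _ => ?_
        rw [ptr1, Matrix.of_apply, Finset.mul_sum]
    _ = (star V * (ptr1 ρ) * V) j j := by
        rw [Finset.sum_comm]
        simp only [Matrix.mul_apply, Matrix.star_apply, RCLike.star_def, Finset.sum_mul]
        refine Finset.sum_congr rfl fun b _ => Finset.sum_congr rfl fun b' _ => by ring
    _ = (hBherm.eigenvalues j : ℂ) := conj_diag_unitary _ hBherm j


/-- The alternative conditional max-entropy is lower bounded by the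
conditional von Neumann entropy: `H₀(A|B)_ρ ≥ H(AB)_ρ − H(B)_ρ`. -/
theorem condVN_le_H0cond {A B : Type*} [Fintype A] [Fintype B] [DecidableEq A] [DecidableEq B]
    (ρ : Matrix (A × B) (A × B) ℂ) (hρ : IsDensity ρ) :
    vnEntropy ρ - vnEntropy (ptr1 ρ) ≤ H0cond ρ := by
  classical
  obtain ⟨hpsd, htr⟩ := hρ
  have hherm : ρ.IsHermitian := hpsd.1
  have hBpsd : (ptr1 ρ).PosSemidef := ptr1_posSemidef hpsd
  have hBherm : (ptr1 ρ).IsHermitian := hBpsd.1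
  have hBtr : (ptr1 ρ).trace = 1 := by rw [ptr1_trace']; exact htr
  have hUU : star (hherm.eigenvectorUnitary : Matrix (A × B) (A × B) ℂ) *
      (hherm.eigenvectorUnitary : Matrix (A × B) (A × B) ℂ) = 1 :=
    Unitary.coe_star_mul_self _
  set c : (A × B) → B → ℝ := fun k j => ∑ a, Complex.normSq
    (∑ b, (starRingEnd ℂ) ((hBherm.eigenvectorUnitary : Matrix B B ℂ) b j) *
      (hherm.eigenvectorUnitary : Matrix (A × B) (A × B) ℂ) (a, b) k) with hcdef
  have hc0 : ∀ k j, 0 ≤ c k j := fun k j => by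
    rw [hcdef]
    exact Finset.sum_nonneg fun a _ => Complex.normSq_nonneg _
  have hc1 : ∀ k, ∑ j, c k j = 1 := fun k => by
    simp only [hcdef]
    exact sum_normSq_one _ hUU _ (Unitary.coe_mul_star_self _) k
  have hlc : ∀ j, ∑ k, hherm.eigenvalues k * c k j = hBherm.eigenvalues j := fun j => by
    simp only [hcdef]
    exact sum_lam_normSq ρ hherm hBherm j
  have hlam0 : ∀ k, 0 ≤ hherm.eigenvalues k := fun k => hpsd.eigenvalues_nonneg k
  have hmu0 : ∀ j, 0 ≤ hBherm.eigenvalues j := fun j => hBpsd.eigenvalues_nonneg j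
  have hlamsum : ∑ k, hherm.eigenvalues k = 1 := by
    have h := sum_eigen_eq_trace ρ hherm
    rw [htr] at h
    exact_mod_cast h
  set t : ℝ := ∑ k, (if hherm.eigenvalues k = 0 then (0:ℝ) else 1) *
    ∑ j, hBherm.eigenvalues j * c k j with htdef
  set p : ((A × B) × B) → ℝ := fun i => hherm.eigenvalues i.1 * c i.1 i.2 with hpdef
  set r : ((A × B) × B) → ℝ := fun i => hBherm.eigenvalues i.2 * c i.1 i.2 with hrdef
  have hp : ∀ i, 0 ≤ p i := fun i => mul_nonneg (hlam0 _) (hc0 _ _)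
  have hr : ∀ i, 0 ≤ r i := fun i => mul_nonneg (hmu0 _) (hc0 _ _)
  have hsum : ∑ i : (A × B) × B, p i = 1 := by
    rw [Fintype.sum_prod_type]
    calc ∑ k, ∑ j, p (k, j) = ∑ k, hherm.eigenvalues k * ∑ j, c k j := by
          refine Finset.sum_congr rfl fun k _ => ?_
          rw [Finset.mul_sum]
      _ = 1 := by simp only [hc1, mul_one]; exact hlamsum
  have hposparts : ∀ i : (A × B) × B, 0 < p i →
      0 < hherm.eigenvalues i.1 ∧ 0 < c i.1 i.2 := by
    intro i hi
    have hne : hherm.eigenvalues i.1 ≠ 0 ∧ c i.1 i.2 ≠ 0 := by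
      rw [← mul_ne_zero_iff]
      exact ne_of_gt hi
    exact ⟨lt_of_le_of_ne (hlam0 _) (Ne.symm hne.1), lt_of_le_of_ne (hc0 _ _) (Ne.symm hne.2)⟩
  have hmupos : ∀ i : (A × B) × B, 0 < p i → 0 < hBherm.eigenvalues i.2 := by
    intro i hi
    have h1 : p i ≤ hBherm.eigenvalues i.2 := by
      rw [← hlc i.2]
      exact Finset.single_le_sum (f := fun k => hherm.eigenvalues k * c k i.2)
        (fun k _ => mul_nonneg (hlam0 _) (hc0 _ _)) (Finset.mem_univ i.1)
    linarith
  have hsupp : ∀ i, 0 < p i → 0 < r i := fun i hi =>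
    mul_pos (hmupos i hi) (hposparts i hi).2
  have ht2 : t = ∑ i : (A × B) × B, (if hherm.eigenvalues i.1 = 0 then 0 else r i) := by
    rw [htdef]
    conv_rhs => rw [Fintype.sum_prod_type]
    refine Finset.sum_congr rfl fun k _ => ?_
    by_cases h : hherm.eigenvalues k = 0
    · simp [h]
    · simp [h, hrdef]
  have hS : ∑ i ∈ Finset.univ.filter (fun i => 0 < p i), r i ≤ t := by
    have hsubset : Finset.univ.filter (fun i : (A × B) × B => 0 < p i) ⊆
        Finset.univ.filter (fun i : (A × B) × B => hherm.eigenvalues i.1 ≠ 0) := by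
      intro i hi
      simp only [Finset.mem_filter, Finset.mem_univ, true_and] at hi ⊢
      exact ne_of_gt (hposparts i hi).1
    have heq : ∑ i ∈ Finset.univ.filter
        (fun i : (A × B) × B => hherm.eigenvalues i.1 ≠ 0), r i = t := by
      rw [ht2, Finset.sum_filter]
      refine Finset.sum_congr rfl fun i _ => ?_
      by_cases h : hherm.eigenvalues i.1 = 0 <;> simp [h]
    calc ∑ i ∈ Finset.univ.filter (fun i => 0 < p i), r i
        ≤ ∑ i ∈ Finset.univ.filter
            (fun i : (A × B) × B => hherm.eigenvalues i.1 ≠ 0), r i :=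
          Finset.sum_le_sum_of_subset_of_nonneg hsubset fun i _ _ => hr i
      _ = t := heq
  have hgibbs := gibbs_aux p r t hp hr hsum hsupp hS
  have hident : ∑ i, p i * (Real.log (p i) - Real.log (r i))
      = ∑ k, hherm.eigenvalues k * Real.log (hherm.eigenvalues k)
        - ∑ j, hBherm.eigenvalues j * Real.log (hBherm.eigenvalues j) := by
    have hterm : ∀ i : (A × B) × B, p i * (Real.log (p i) - Real.log (r i))
        = hherm.eigenvalues i.1 * c i.1 i.2 * Real.log (hherm.eigenvalues i.1)
          - hherm.eigenvalues i.1 * c i.1 i.2 * Real.log (hBherm.eigenvalues i.2) := by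
      intro i
      by_cases hz : 0 < p i
      · obtain ⟨hl, hcpos⟩ := hposparts i hz
        have hm := hmupos i hz
        simp only [hpdef, hrdef]
        rw [Real.log_mul (ne_of_gt hl) (ne_of_gt hcpos),
          Real.log_mul (ne_of_gt hm) (ne_of_gt hcpos)]
        ring
      · have hz0 : p i = 0 := le_antisymm (not_lt.mp hz) (hp i)
        have hz1 : hherm.eigenvalues i.1 * c i.1 i.2 = 0 := hz0
        rw [hz0, hz1]
        ring
    calc ∑ i, p i * (Real.log (p i) - Real.log (r i))
        = ∑ i : (A × B) × B, (hherm.eigenvalues i.1 * c i.1 i.2 * Real.log (hherm.eigenvalues i.1)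
            - hherm.eigenvalues i.1 * c i.1 i.2 * Real.log (hBherm.eigenvalues i.2)) :=
          Finset.sum_congr rfl fun i _ => hterm i
      _ = (∑ i : (A × B) × B, hherm.eigenvalues i.1 * c i.1 i.2 * Real.log (hherm.eigenvalues i.1))
          - ∑ i : (A × B) × B, hherm.eigenvalues i.1 * c i.1 i.2 * Real.log (hBherm.eigenvalues i.2) :=
          by rw [Finset.sum_sub_distrib]
      _ = (∑ k, hherm.eigenvalues k * Real.log (hherm.eigenvalues k))
          - ∑ j, hBherm.eigenvalues j * Real.log (hBherm.eigenvalues j) := by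
          congr 1
          · rw [Fintype.sum_prod_type]
            dsimp only
            refine Finset.sum_congr rfl fun k _ => ?_
            have : ∑ j, hherm.eigenvalues k * c k j * Real.log (hherm.eigenvalues k)
                = (hherm.eigenvalues k * Real.log (hherm.eigenvalues k)) * ∑ j, c k j := by
              rw [Finset.mul_sum]
              exact Finset.sum_congr rfl fun j _ => by ring
            rw [this, hc1, mul_one]
          · rw [Fintype.sum_prod_type, Finset.sum_comm]
            dsimp only
            refine Finset.sum_congr rfl fun j _ => ?_
            rw [← Finset.sum_mul, hlc j]
  have hlog2 : (0:ℝ) < Real.log 2 := Real.log_pos (by norm_num)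
  have hkey : (∑ j, hBherm.eigenvalues j * Real.log (hBherm.eigenvalues j))
      - ∑ k, hherm.eigenvalues k * Real.log (hherm.eigenvalues k) ≤ Real.log t := by
    rw [hident] at hgibbs
    linarith
  -- entropies in terms of logs
  have hEAB : vnEntropy ρ = -∑ k, hherm.eigenvalues k * Real.logb 2 (hherm.eigenvalues k) := by
    unfold vnEntropy
    rw [dif_pos hherm]
  have hEB : vnEntropy (ptr1 ρ)
      = -∑ j, hBherm.eigenvalues j * Real.logb 2 (hBherm.eigenvalues j) := by
    unfold vnEntropy
    rw [dif_pos hBherm]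
  have hdiv1 : ∑ k, hherm.eigenvalues k * Real.logb 2 (hherm.eigenvalues k)
      = (∑ k, hherm.eigenvalues k * Real.log (hherm.eigenvalues k)) / Real.log 2 := by
    rw [Finset.sum_div]
    refine Finset.sum_congr rfl fun k _ => ?_
    rw [Real.logb, mul_div_assoc]
  have hdiv2 : ∑ j, hBherm.eigenvalues j * Real.logb 2 (hBherm.eigenvalues j)
      = (∑ j, hBherm.eigenvalues j * Real.log (hBherm.eigenvalues j)) / Real.log 2 := by
    rw [Finset.sum_div]
    refine Finset.sum_congr rfl fun j _ => ?_
    rw [Real.logb, mul_div_assoc]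
  have claim1 : vnEntropy ρ - vnEntropy (ptr1 ρ) ≤ Real.logb 2 t := by
    rw [hEAB, hEB, hdiv1, hdiv2, Real.logb]
    have hring : -((∑ k, hherm.eigenvalues k * Real.log (hherm.eigenvalues k)) / Real.log 2)
        - -((∑ j, hBherm.eigenvalues j * Real.log (hBherm.eigenvalues j)) / Real.log 2)
        = ((∑ j, hBherm.eigenvalues j * Real.log (hBherm.eigenvalues j))
            - ∑ k, hherm.eigenvalues k * Real.log (hherm.eigenvalues k)) / Real.log 2 := by
      ring
    rw [hring]
    exact (div_le_div_iff_of_pos_right hlog2).mpr hkey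
  have hmem : Real.logb 2 t ∈ { x | ∃ σ : Matrix B B ℂ, IsDensity σ ∧
      x = Real.logb 2 ((suppProj ρ * ((1 : Matrix A A ℂ) ⊗ₖ σ)).trace.re) } := by
    refine ⟨ptr1 ρ, ⟨hBpsd, hBtr⟩, ?_⟩
    congr 1
    rw [trace_supp_kron ρ hherm hBherm, Complex.ofReal_re, htdef]
  have hbdd : BddAbove { x | ∃ σ : Matrix B B ℂ, IsDensity σ ∧
      x = Real.logb 2 ((suppProj ρ * ((1 : Matrix A A ℂ) ⊗ₖ σ)).trace.re) } := by
    refine ⟨max 0 (Real.logb 2 ((Fintype.card A : ℝ) * (Fintype.card B : ℝ))), ?_⟩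
    rintro x ⟨σ, ⟨hσpsd, hσtr⟩, rfl⟩
    have hσherm : σ.IsHermitian := hσpsd.1
    set s : ℝ := ∑ k, (if hherm.eigenvalues k = 0 then (0:ℝ) else 1) *
      ∑ j, hσherm.eigenvalues j *
        ∑ a, Complex.normSq (∑ b, (starRingEnd ℂ) ((hσherm.eigenvectorUnitary : Matrix B B ℂ) b j)
          * (hherm.eigenvectorUnitary : Matrix (A × B) (A × B) ℂ) (a, b) k) with hsdef
    have hsre : ((suppProj ρ * ((1 : Matrix A A ℂ) ⊗ₖ σ)).trace).re = s := by
      rw [trace_supp_kron ρ hherm hσherm, Complex.ofReal_re, hsdef]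
    have hνsum : ∑ j, hσherm.eigenvalues j = 1 := by
      have h := sum_eigen_eq_trace σ hσherm
      rw [hσtr] at h
      exact_mod_cast h
    have hd1 : ∀ k, ∑ j, ∑ a, Complex.normSq
        (∑ b, (starRingEnd ℂ) ((hσherm.eigenvectorUnitary : Matrix B B ℂ) b j)
          * (hherm.eigenvectorUnitary : Matrix (A × B) (A × B) ℂ) (a, b) k) = 1 := fun k =>
      sum_normSq_one _ hUU _ (Unitary.coe_mul_star_self _) k
    have hinner : ∀ k, 0 ≤ (∑ j, hσherm.eigenvalues j *
        ∑ a, Complex.normSq (∑ b, (starRingEnd ℂ) ((hσherm.eigenvectorUnitary : Matrix B B ℂ) b j)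
          * (hherm.eigenvectorUnitary : Matrix (A × B) (A × B) ℂ) (a, b) k)) ∧
        (∑ j, hσherm.eigenvalues j *
        ∑ a, Complex.normSq (∑ b, (starRingEnd ℂ) ((hσherm.eigenvectorUnitary : Matrix B B ℂ) b j)
          * (hherm.eigenvectorUnitary : Matrix (A × B) (A × B) ℂ) (a, b) k)) ≤ 1 := by
      intro k
      constructor
      · refine Finset.sum_nonneg fun j _ => mul_nonneg (hσpsd.eigenvalues_nonneg j) ?_
        exact Finset.sum_nonneg fun a _ => Complex.normSq_nonneg _
      · calc (∑ j, hσherm.eigenvalues j *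
            ∑ a, Complex.normSq (∑ b, (starRingEnd ℂ) ((hσherm.eigenvectorUnitary : Matrix B B ℂ) b j)
              * (hherm.eigenvectorUnitary : Matrix (A × B) (A × B) ℂ) (a, b) k))
            ≤ ∑ j, hσherm.eigenvalues j * 1 := by
              refine Finset.sum_le_sum fun j _ => ?_
              refine mul_le_mul_of_nonneg_left ?_ (hσpsd.eigenvalues_nonneg j)
              rw [← hd1 k]
              exact Finset.single_le_sum
                (f := fun j => ∑ a, Complex.normSq
                  (∑ b, (starRingEnd ℂ) ((hσherm.eigenvectorUnitary : Matrix B B ℂ) b j)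
                    * (hherm.eigenvectorUnitary : Matrix (A × B) (A × B) ℂ) (a, b) k))
                (fun j _ => Finset.sum_nonneg fun a _ => Complex.normSq_nonneg _)
                (Finset.mem_univ j)
          _ = 1 := by simp only [mul_one]; exact hνsum
    have hs0 : 0 ≤ s := by
      rw [hsdef]
      refine Finset.sum_nonneg fun k _ => mul_nonneg ?_ (hinner k).1
      split <;> norm_num
    have hsle : s ≤ (Fintype.card A : ℝ) * (Fintype.card B : ℝ) := by
      rw [hsdef]
      calc (∑ k, (if hherm.eigenvalues k = 0 then (0:ℝ) else 1) *
            ∑ j, hσherm.eigenvalues j *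
              ∑ a, Complex.normSq (∑ b, (starRingEnd ℂ) ((hσherm.eigenvectorUnitary : Matrix B B ℂ) b j)
                * (hherm.eigenvectorUnitary : Matrix (A × B) (A × B) ℂ) (a, b) k))
          ≤ ∑ _k : A × B, (1:ℝ) := by
            refine Finset.sum_le_sum fun k _ => ?_
            have h1 : (if hherm.eigenvalues k = 0 then (0:ℝ) else 1) ≤ 1 := by
              split <;> norm_num
            have h0 : (0:ℝ) ≤ (if hherm.eigenvalues k = 0 then (0:ℝ) else 1) := by
              split <;> norm_num
            calc (if hherm.eigenvalues k = 0 then (0:ℝ) else 1) *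
                  (∑ j, hσherm.eigenvalues j *
                    ∑ a, Complex.normSq (∑ b, (starRingEnd ℂ) ((hσherm.eigenvectorUnitary : Matrix B B ℂ) b j)
                      * (hherm.eigenvectorUnitary : Matrix (A × B) (A × B) ℂ) (a, b) k))
                ≤ 1 * 1 := mul_le_mul h1 (hinner k).2 (hinner k).1 (by norm_num)
              _ = 1 := by norm_num
        _ = (Fintype.card A : ℝ) * (Fintype.card B : ℝ) := by
            rw [Finset.sum_const, Finset.card_univ, Fintype.card_prod]
            push_cast [nsmul_eq_mul]
            ring
    rw [hsre]
    by_cases hz : s = 0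
    · rw [hz, Real.logb_zero]
      exact le_max_left _ _
    · have hspos : 0 < s := lt_of_le_of_ne hs0 (Ne.symm hz)
      refine le_trans ?_ (le_max_right _ _)
      exact Real.logb_le_logb_of_le (by norm_num) hspos hsle
  exact le_trans claim1 (le_csSup hbdd hmem)

end
end
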